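/- Let K be a conjugacy class of a finite group G such that KK⁻¹ = {1} ∪ D for a conjugacy class D of G. Then |D| divides |K|(|K|−1) and the quotient ⟨K⟩/⟨D⟩ is cyclic. -/

import Mathlib

open Pointwise

/-- The conjugacy class of `a` in `G`. -/
def conjClass (G : Type*) [Group G] (a : G) : Set G := {b | IsConj a b}

theorem conjClass_conj_mem {G : Type*} [Group G] {y a : G} (ha : a ∈ conjClass G y) (g : G) :
    g * a * g⁻¹ ∈ conjClass G y :=
  ha.trans (isConj_iff.mpr ⟨g, rfl⟩)

theorem closure_conjClass_normal {G : Type*} [Group G] (y : G) :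
    (Subgroup.closure (conjClass G y)).Normal := by
  constructor
  intro n hn g
  induction hn using Subgroup.closure_induction with
  | mem a ha => exact Subgroup.subset_closure (conjClass_conj_mem ha g)
  | one => simpa using Subgroup.one_mem _
  | mul a b _ _ pa pb =>
      have : g * (a * b) * g⁻¹ = (g * a * g⁻¹) * (g * b * g⁻¹) := by group
      rw [this]; exact Subgroup.mul_mem _ pa pb
  | inv a _ pa =>
      have : g * a⁻¹ * g⁻¹ = (g * a * g⁻¹)⁻¹ := by group
      rw [this]; exact Subgroup.inv_mem _ pa

theorem stmt3 {G : Type*} [Group G] [Fintype G] (x d : G)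
    (h : conjClass G x * (conjClass G x)⁻¹ = {1} ∪ conjClass G d) :
    Nat.card (conjClass G d) ∣ Nat.card (conjClass G x) * (Nat.card (conjClass G x) - 1) ∧
    ∃ hn : ((Subgroup.closure (conjClass G d)).subgroupOf
        (Subgroup.closure (conjClass G x))).Normal,
      letI := hn
      IsCyclic (Subgroup.closure (conjClass G x) ⧸
        (Subgroup.closure (conjClass G d)).subgroupOf (Subgroup.closure (conjClass G x))) := by
  classical
  set K := conjClass G x with hK
  set D := conjClass G d with hD
  have hxK : x ∈ K := IsConj.refl x
  have hdD : d ∈ D := IsConj.refl d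
  have hKD : ∀ a b : G, a ∈ K → b ∈ K → a ≠ b → a * b⁻¹ ∈ D := by
    intro a b ha hb hab
    have : a * b⁻¹ ∈ K * K⁻¹ := Set.mul_mem_mul ha (Set.inv_mem_inv.mpr hb)
    rw [h] at this
    rcases this with h1 | h2
    · exact absurd (by simpa [mul_inv_eq_one] using h1) hab
    · exact h2
  constructor
  · -- divisibility
    set Kf := (Set.toFinite K).toFinset with hKf
    set Df := (Set.toFinite D).toFinset with hDf
    have hmemK : ∀ a, a ∈ Kf ↔ a ∈ K := fun a => Set.Finite.mem_toFinset _
    have hmemD : ∀ a, a ∈ Df ↔ a ∈ D := fun a => Set.Finite.mem_toFinset _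
    set T := Kf.offDiag with hT
    have hmemT : ∀ p : G × G, p ∈ T ↔ p.1 ∈ K ∧ p.2 ∈ K ∧ p.1 ≠ p.2 := by
      intro p
      rw [hT, Finset.mem_offDiag, hmemK, hmemK]
    have hcardT : T.card = Kf.card * (Kf.card - 1) := by
      rw [hT, Finset.offDiag_card, Nat.mul_sub, Nat.mul_one]
    have hmap : ∀ p ∈ T, p.1 * p.2⁻¹ ∈ Df := by
      intro p hp
      rw [hmemT] at hp
      exact (hmemD _).mpr (hKD _ _ hp.1 hp.2.1 hp.2.2)
    have hsum := Finset.card_eq_sum_card_fiberwise hmap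
    have hconst : ∀ g ∈ Df, (T.filter (fun p => p.1 * p.2⁻¹ = g)).card
        = (T.filter (fun p => p.1 * p.2⁻¹ = d)).card := by
      intro g hg
      obtain ⟨c, hc⟩ : ∃ c : G, c * d * c⁻¹ = g := isConj_iff.mp ((hmemD g).mp hg)
      apply Finset.card_nbij' (fun p => (c⁻¹ * p.1 * c, c⁻¹ * p.2 * c))
        (fun p => (c * p.1 * c⁻¹, c * p.2 * c⁻¹))
      · intro p hp
        simp only [Finset.mem_coe, Finset.mem_filter, hmemT] at hp ⊢
        obtain ⟨⟨h1, h2, h3⟩, h4⟩ := hp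
        refine ⟨⟨?_, ?_, ?_⟩, ?_⟩
        · simpa using conjClass_conj_mem h1 c⁻¹
        · simpa using conjClass_conj_mem h2 c⁻¹
        · intro he
          exact h3 (by
            have := congrArg (fun z => c * z * c⁻¹) he
            simpa [mul_assoc] using this)
        · have : (c⁻¹ * p.1 * c) * (c⁻¹ * p.2 * c)⁻¹ = c⁻¹ * (p.1 * p.2⁻¹) * c := by group
          rw [this, h4, ← hc]; group
      · intro p hp
        simp only [Finset.mem_coe, Finset.mem_filter, hmemT] at hp ⊢
        obtain ⟨⟨h1, h2, h3⟩, h4⟩ := hp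
        refine ⟨⟨conjClass_conj_mem h1 c, conjClass_conj_mem h2 c, ?_⟩, ?_⟩
        · intro he
          exact h3 (by
            have := congrArg (fun z => c⁻¹ * z * c) he
            simpa [mul_assoc] using this)
        · have : (c * p.1 * c⁻¹) * (c * p.2 * c⁻¹)⁻¹ = c * (p.1 * p.2⁻¹) * c⁻¹ := by group
          rw [this, h4, hc]
      · intro p _; ext <;> simp <;> group
      · intro p _; ext <;> simp <;> group
    have : T.card = Df.card * (T.filter (fun p => p.1 * p.2⁻¹ = d)).card := by
      rw [hsum, Finset.sum_congr rfl hconst, Finset.sum_const, smul_eq_mul]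
    have hdvd : Df.card ∣ T.card := ⟨_, this⟩
    have hND : Nat.card (conjClass G d) = Df.card := by
      rw [Nat.card_coe_set_eq, Set.ncard_eq_toFinset_card _ (Set.toFinite D)]
    have hNK : Nat.card (conjClass G x) = Kf.card := by
      rw [Nat.card_coe_set_eq, Set.ncard_eq_toFinset_card _ (Set.toFinite K)]
    rw [hND, hNK, ← hcardT]
    exact hdvd
  · -- cyclic
    have hN := closure_conjClass_normal (G := G) d
    refine ⟨hN.subgroupOf _, ?_⟩
    set H := Subgroup.closure K with hH
    set N' := (Subgroup.closure D).subgroupOf H with hN'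
    haveI : N'.Normal := hN.subgroupOf _
    set g : H ⧸ N' := QuotientGroup.mk ⟨x, Subgroup.subset_closure hxK⟩ with hg
    constructor
    refine ⟨g, fun q => ?_⟩
    have htop : (⊤ : Subgroup (H ⧸ N')) ≤ Subgroup.zpowers g := by
      have h1 : (⊤ : Subgroup (H ⧸ N')) = Subgroup.map (QuotientGroup.mk' N') ⊤ := by
        rw [Subgroup.map_top_of_surjective _ (QuotientGroup.mk'_surjective N')]
      rw [h1, ← Subgroup.closure_closure_coe_preimage (k := K),
        MonoidHom.map_closure]
      apply Subgroup.closure_le _ |>.mpr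
      rintro _ ⟨⟨y, hy⟩, hyK, rfl⟩
      have hyK' : y ∈ K := hyK
      have : (QuotientGroup.mk' N') ⟨y, hy⟩ = g := by
        rw [hg, QuotientGroup.mk'_apply, QuotientGroup.eq]
        rw [hN', Subgroup.mem_subgroupOf]
        show (y : G)⁻¹ * x ∈ Subgroup.closure D
        by_cases hyx : y = x
        · simp [hyx, Subgroup.one_mem]
        · have hxy : x * y⁻¹ ∈ D := hKD x y hxK hyK' (Ne.symm hyx)
          have : y⁻¹ * x = y⁻¹ * (x * y⁻¹) * y⁻¹⁻¹ := by group
          rw [this]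
          exact Subgroup.subset_closure (conjClass_conj_mem hxy y⁻¹)
      rw [this]
      exact Subgroup.mem_zpowers g
    exact htop (Subgroup.mem_top q)
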